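/- For the SI system with constant transmission rate τ, the cumulative number of infectious 𝓘(t) = ∫_{t₀}^t I(σ)dσ satisfies the scalar ODE 𝓘'(t) = I₀ + S₀(1 − exp(−τ𝓘(t))) − ν𝓘(t) with 𝓘(t₀) = 0. -/

import Mathlib

open intervalIntegral

/-- For the SI system with constant transmission rate, the cumulative number of
infectious `𝓘 t = ∫_{t₀}^t I` satisfies
`𝓘' t = I₀ + S₀ (1 − exp (−τ 𝓘 t)) − ν 𝓘 t` with `𝓘 t₀ = 0`. -/
theorem stmt_3 (τ ν S₀ I₀ t₀ : ℝ) (hτ : 0 < τ) (hν : 0 < ν) (hS₀ : 0 < S₀) (hI₀ : 0 < I₀)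
    (S I : ℝ → ℝ) (hIc : Continuous I)
    (hS : ∀ t : ℝ, t₀ ≤ t → HasDerivAt S (-(τ * S t * I t)) t)
    (hI : ∀ t : ℝ, t₀ ≤ t → HasDerivAt I (τ * S t * I t - ν * I t) t)
    (hS0 : S t₀ = S₀) (hI0 : I t₀ = I₀) :
    ((∫ σ in t₀..t₀, I σ) = 0) ∧
    ∀ t : ℝ, t₀ ≤ t →
      HasDerivAt (fun s => ∫ σ in t₀..s, I σ)
        (I₀ + S₀ * (1 - Real.exp (-τ * ∫ σ in t₀..t, I σ)) - ν * ∫ σ in t₀..t, I σ) t := by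
  set 𝓘 : ℝ → ℝ := fun s => ∫ σ in t₀..s, I σ with h𝓘def
  have h𝓘 : ∀ t : ℝ, HasDerivAt 𝓘 (I t) t := fun t =>
    intervalIntegral.integral_hasDerivAt_right (hIc.intervalIntegrable _ _)
      (hIc.stronglyMeasurableAtFilter _ _) hIc.continuousAt
  have h𝓘0 : 𝓘 t₀ = 0 := intervalIntegral.integral_same
  refine ⟨h𝓘0, fun t ht => ?_⟩
  -- conservation: S + I = S₀ + I₀ - ν 𝓘 on [t₀, t]
  have claimA : ∀ y ∈ Set.Icc t₀ t, S y + I y = S₀ + I₀ - ν * 𝓘 y := by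
    have := eq_of_has_deriv_right_eq (f := fun x => S x + I x)
      (g := fun x => S₀ + I₀ - ν * 𝓘 x) (f' := fun x => -(ν * I x)) (a := t₀) (b := t)
      (fun x hx => by
        have h := ((hS x hx.1).add (hI x hx.1))
        have h' : HasDerivAt (fun x => S x + I x) (-(ν * I x)) x := by
          exact h.congr_deriv (by ring)
        exact h'.hasDerivWithinAt)
      (fun x _ => by
        have h : HasDerivAt (fun x => S₀ + I₀ - ν * 𝓘 x) (0 - ν * I x) x :=
          (hasDerivAt_const _ _).sub ((h𝓘 x).const_mul ν)
        have h' : HasDerivAt (fun x => S₀ + I₀ - ν * 𝓘 x) (-(ν * I x)) x := by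
          convert h using 1; ring
        exact h'.hasDerivWithinAt)
      (fun x hx => ((hS x hx.1).continuousAt.add (hI x hx.1).continuousAt).continuousWithinAt)
      (by fun_prop)
      (by simp [h𝓘0, hS0, hI0])
    exact this
  -- conservation: S * exp(τ 𝓘) = S₀ on [t₀, t]
  have claimB : ∀ y ∈ Set.Icc t₀ t, S y * Real.exp (τ * 𝓘 y) = S₀ := by
    have := eq_of_has_deriv_right_eq (f := fun x => S x * Real.exp (τ * 𝓘 x))
      (g := fun _ => S₀) (f' := fun _ => 0) (a := t₀) (b := t)
      (fun x hx => by
        have he : HasDerivAt (fun x => Real.exp (τ * 𝓘 x))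
            (Real.exp (τ * 𝓘 x) * (τ * I x)) x := ((h𝓘 x).const_mul τ).exp
        have h := (hS x hx.1).mul he
        have h' : HasDerivAt (fun x => S x * Real.exp (τ * 𝓘 x)) 0 x := by
          exact h.congr_deriv (by ring)
        exact h'.hasDerivWithinAt)
      (fun x _ => (hasDerivAt_const _ _).hasDerivWithinAt)
      (fun x hx => ((hS x hx.1).continuousAt.mul
        (Real.continuous_exp.continuousAt.comp
          (((h𝓘 x).continuousAt.const_smul τ : ContinuousAt _ _)))).continuousWithinAt)
      continuousOn_const
      (by simp [h𝓘0, hS0])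
    exact this
  have hmem : t ∈ Set.Icc t₀ t := ⟨ht, le_refl t⟩
  have hA := claimA t hmem
  have hB := claimB t hmem
  have hSt : S t = S₀ * Real.exp (-τ * 𝓘 t) := by
    have hexp : Real.exp (τ * 𝓘 t) * Real.exp (-τ * 𝓘 t) = 1 := by
      rw [← Real.exp_add]; ring_nf; exact Real.exp_zero
    have := congrArg (fun z => z * Real.exp (-τ * 𝓘 t)) hB
    simp only [mul_assoc, hexp, mul_one] at this
    linarith
  have hIt : I t = I₀ + S₀ * (1 - Real.exp (-τ * 𝓘 t)) - ν * 𝓘 t := by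
    rw [hSt] at hA; ring_nf at hA ⊢; linarith
  rw [← hIt]
  exact h𝓘 t
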